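/- Let t ≥ 3 and q ≥ 2 be integers, let G be a finite {t-broom, K_{t,t}}-free graph, and let V_1, …, V_q be pairwise disjoint independent sets in G with V_i = {v_i} for i ∈ [q-1] and |V_q| = t, such that Q := G[V_1 ∪ ⋯ ∪ V_q] is a complete q-partite graph with parts V_1, …, V_q, with q maximum (there do not exist pairwise disjoint independent sets V'_1, …, V'_{q+1} with |V'_i| = 1 for i ∈ [q] and |V'_{q+1}| = t inducing a complete (q+1)-partite graph). Let A = {v ∈ N(V(Q)) : v is neutral to V_q and not complete to V(Q) \ V_q}, B = {v ∈ N(V(Q)) : v is neutral to V_q and complete to V(Q) \ V_q}, W = {v ∈ N(V(Q)) : v is anticomplete to V_q}. Let R be a positive integer with the Ramsey property for (t, ω(G)), and let W_0 = {v ∈ W : the connected component of G[W] containing v has chromatic number at most 3R}. Then A ∪ B is anticomplete to W \ W_0. -/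

import Mathlib

open SimpleGraph

/-- The `t`-broom: `K_{1,t+1}` with one edge subdivided once.
Vertex `0` is `u₀`, vertex `1` is `v₁`, vertex `2` is `v₂`,
and vertices `3, …, t+2` are `u₁, …, u_t`. -/
def tBroom (t : ℕ) : SimpleGraph (Fin (t + 3)) :=
  SimpleGraph.fromRel (fun a b =>
    (a = 0 ∧ b = 1) ∨ (a = 1 ∧ b = 2) ∨ (a = 0 ∧ 3 ≤ b.val))

/-- `G` is `H`-free: no induced subgraph of `G` is isomorphic to `H`.
(A graph embedding `H ↪g G` is exactly an isomorphism of `H` onto an induced subgraph of `G`.) -/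
def Free {V W : Type*} (G : SimpleGraph V) (H : SimpleGraph W) : Prop :=
  ¬ Nonempty (H ↪g G)

/-- The neighborhood `N(S)` of a set `S`: vertices outside `S` with a neighbor in `S`. -/
def nbhd {V : Type*} (G : SimpleGraph V) (S : Set V) : Set V :=
  {v | v ∉ S ∧ ∃ u ∈ S, G.Adj u v}

/-- `v` is complete to `S`: adjacent to every vertex of `S`. -/
def CompleteTo {V : Type*} (G : SimpleGraph V) (v : V) (S : Set V) : Prop :=
  ∀ u ∈ S, G.Adj v u

/-- `v` is anticomplete to `S`: adjacent to no vertex of `S`. -/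
def AnticompleteTo {V : Type*} (G : SimpleGraph V) (v : V) (S : Set V) : Prop :=
  ∀ u ∈ S, ¬ G.Adj v u

/-- `v` is neutral to `S`: neither complete nor anticomplete to `S`. -/
def NeutralTo {V : Type*} (G : SimpleGraph V) (v : V) (S : Set V) : Prop :=
  ¬ CompleteTo G v S ∧ ¬ AnticompleteTo G v S

/-- `S` is an independent set of size `s` in `G`. -/
def IsNIndepSet' {V : Type*} (G : SimpleGraph V) (s : ℕ) (S : Finset V) : Prop :=
  S.card = s ∧ ∀ u ∈ S, ∀ v ∈ S, u ≠ v → ¬ G.Adj u v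

/-- `R` has the Ramsey property for `(s, n)`: every finite simple graph on at least `R`
vertices contains an independent set of size `s` or a clique of size `n`. -/
def RamseyProp (R s n : ℕ) : Prop :=
  ∀ (W : Type) [Fintype W] (H : SimpleGraph W), R ≤ Fintype.card W →
    (∃ S : Finset W, IsNIndepSet' H s S) ∨ (∃ S : Finset W, H.IsNClique n S)

/-- The distance (in `ℕ∞`) from a set `S` to a vertex `v`:
the minimum over `u ∈ S` of the distance from `u` to `v`. -/
noncomputable def eDistSet {V : Type*} (G : SimpleGraph V) (S : Set V) (v : V) : ℕ∞ :=
  ⨅ u ∈ S, G.edist u v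

/-- `N^i(S)`: the set of vertices (outside `S`) at distance exactly `i` from `S`. -/
noncomputable def distNbhd {V : Type*} (G : SimpleGraph V) (S : Set V) (i : ℕ) : Set V :=
  {v | v ∉ S ∧ eDistSet G S v = (i : ℕ∞)}

/-- `N^{≥ i}(S) = ⋃_{j ≥ i} N^j(S)`. -/
noncomputable def distNbhdGe {V : Type*} (G : SimpleGraph V) (S : Set V) (i : ℕ) : Set V :=
  ⋃ j ∈ {j : ℕ | i ≤ j}, distNbhd G S j

/-- Given the union `U = V_1 ∪ ⋯ ∪ V_{q-1}` and the last part `Vq`, the set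
`W_I = {v ∈ W : v complete to I, anticomplete to U \ I}`, where
`W = {v ∈ N(U ∪ Vq) : v anticomplete to Vq}`. -/
def Wpart {V : Type*} (G : SimpleGraph V) (U Vq I : Set V) : Set V :=
  {v ∈ nbhd G (U ∪ Vq) | AnticompleteTo G v Vq ∧ CompleteTo G v I ∧
    AnticompleteTo G v (U \ I)}

lemma tBroom_adj (t : ℕ) (a b : Fin (t+3)) :
    (tBroom t).Adj a b ↔
      ((a.val = 0 ∧ b.val = 1) ∨ (b.val = 0 ∧ a.val = 1) ∨ (a.val = 1 ∧ b.val = 2) ∨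
        (b.val = 1 ∧ a.val = 2) ∨ (a.val = 0 ∧ 3 ≤ b.val) ∨ (b.val = 0 ∧ 3 ≤ a.val)) := by
  rw [tBroom, fromRel_adj]
  simp only [ne_eq, Fin.ext_iff, show ((0:Fin (t+3)):ℕ) = 0 from rfl,
    show ((1:Fin (t+3)):ℕ) = 1 from rfl, show ((2:Fin (t+3)):ℕ) = 2 from rfl]
  constructor
  · rintro ⟨hne, h⟩; omega
  · intro h; omega

def broomMap {V : Type} (t : ℕ) (u0 v1 v2 : V) (g : Fin t → V) : Fin (t+3) → V := fun a =>
  if h0 : a.val = 0 then u0 else if h1 : a.val = 1 then v1 else if h2 : a.val = 2 then v2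
  else g ⟨a.val - 3, by omega⟩

lemma broomMap_eval0 {V : Type} (t : ℕ) (u0 v1 v2 : V) (g : Fin t → V) (a : Fin (t+3))
    (h : a.val = 0) : broomMap t u0 v1 v2 g a = u0 := by simp [broomMap, h]

lemma broomMap_eval1 {V : Type} (t : ℕ) (u0 v1 v2 : V) (g : Fin t → V) (a : Fin (t+3))
    (h : a.val = 1) : broomMap t u0 v1 v2 g a = v1 := by simp [broomMap, h]

lemma broomMap_eval2 {V : Type} (t : ℕ) (u0 v1 v2 : V) (g : Fin t → V) (a : Fin (t+3))
    (h : a.val = 2) : broomMap t u0 v1 v2 g a = v2 := by simp [broomMap, h]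

lemma broomMap_eval3 {V : Type} (t : ℕ) (u0 v1 v2 : V) (g : Fin t → V) (a : Fin (t+3))
    (h : 3 ≤ a.val) : broomMap t u0 v1 v2 g a = g ⟨a.val - 3, by omega⟩ := by
  rw [broomMap, dif_neg (by omega), dif_neg (by omega), dif_neg (by omega)]

lemma broom_of_data {V : Type} (G : SimpleGraph V) (t : ℕ)
    (hfree : _root_.Free G (tBroom t))
    (u0 v1 v2 : V) (S : Finset V) (hcard : S.card = t)
    (h01 : G.Adj u0 v1) (h12 : G.Adj v1 v2) (h02 : ¬ G.Adj u0 v2) (hne02 : u0 ≠ v2)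
    (h0S : ∀ s ∈ S, G.Adj u0 s)
    (h1S : ∀ s ∈ S, ¬ G.Adj v1 s) (h2S : ∀ s ∈ S, ¬ G.Adj v2 s)
    (hSS : ∀ s ∈ S, ∀ s' ∈ S, s ≠ s' → ¬ G.Adj s s')
    (h1mem : v1 ∉ S) (h2mem : v2 ∉ S) : False := by
  apply hfree
  have h0mem : u0 ∉ S := fun h => G.irrefl (h0S u0 h)
  have hne01 : u0 ≠ v1 := h01.ne
  have hne12 : v1 ≠ v2 := h12.ne
  set g : Fin t → V := fun i => ((S.equivFin.symm (Fin.cast hcard.symm i)) : V) with hgdef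
  have hgmem : ∀ i, g i ∈ S := fun i => (S.equivFin.symm (Fin.cast hcard.symm i)).prop
  have hginj : Function.Injective g := by
    intro i j hij
    exact (Fin.cast_injective _) (S.equivFin.symm.injective (Subtype.val_injective hij))
  classical
  set f := broomMap t u0 v1 v2 g with hfdef
  have hcases : ∀ a : Fin (t+3), a.val = 0 ∨ a.val = 1 ∨ a.val = 2 ∨ 3 ≤ a.val := by
    intro a; omega
  refine ⟨⟨⟨f, ?_⟩, ?_⟩⟩
  · -- injective
    intro a b hab
    rcases hcases a with ha|ha|ha|ha <;> rcases hcases b with hb|hb|hb|hb <;>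
      rw [hfdef] at hab <;>
      (try rw [broomMap_eval0 t u0 v1 v2 g a ha] at hab) <;>
      (try rw [broomMap_eval1 t u0 v1 v2 g a ha] at hab) <;>
      (try rw [broomMap_eval2 t u0 v1 v2 g a ha] at hab) <;>
      (try rw [broomMap_eval3 t u0 v1 v2 g a ha] at hab) <;>
      (try rw [broomMap_eval0 t u0 v1 v2 g b hb] at hab) <;>
      (try rw [broomMap_eval1 t u0 v1 v2 g b hb] at hab) <;>
      (try rw [broomMap_eval2 t u0 v1 v2 g b hb] at hab) <;>
      (try rw [broomMap_eval3 t u0 v1 v2 g b hb] at hab) <;>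
      first
        | exact Fin.ext (by omega)
        | exact absurd hab hne01
        | exact absurd hab.symm hne01
        | exact absurd hab hne02
        | exact absurd hab.symm hne02
        | exact absurd hab hne12
        | exact absurd hab.symm hne12
        | exact (h0mem (by rw [hab]; exact hgmem _)).elim
        | exact (h0mem (by rw [← hab]; exact hgmem _)).elim
        | exact (h1mem (by rw [hab]; exact hgmem _)).elim
        | exact (h1mem (by rw [← hab]; exact hgmem _)).elim
        | exact (h2mem (by rw [hab]; exact hgmem _)).elim
        | exact (h2mem (by rw [← hab]; exact hgmem _)).elim
        | exact Fin.ext (by have h := hginj hab; rw [Fin.mk.injEq] at h; omega)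
  · -- map_rel_iff
    intro a b
    show G.Adj (f a) (f b) ↔ _
    rw [tBroom_adj]
    rcases hcases a with ha|ha|ha|ha <;> rcases hcases b with hb|hb|hb|hb <;>
      rw [hfdef] <;>
      (try rw [broomMap_eval0 t u0 v1 v2 g a ha]) <;>
      (try rw [broomMap_eval1 t u0 v1 v2 g a ha]) <;>
      (try rw [broomMap_eval2 t u0 v1 v2 g a ha]) <;>
      (try rw [broomMap_eval3 t u0 v1 v2 g a ha]) <;>
      (try rw [broomMap_eval0 t u0 v1 v2 g b hb]) <;>
      (try rw [broomMap_eval1 t u0 v1 v2 g b hb]) <;>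
      (try rw [broomMap_eval2 t u0 v1 v2 g b hb]) <;>
      (try rw [broomMap_eval3 t u0 v1 v2 g b hb]) <;>
      constructor <;> intro h
    -- now 32 goals; close by omega-driven tauto
    all_goals first
      | omega
      | exact absurd h (G.irrefl)
      | exact h01
      | exact h01.symm
      | exact h12
      | exact h12.symm
      | exact absurd h h02
      | exact absurd h.symm h02
      | exact absurd h (h1S _ (hgmem _))
      | exact absurd h.symm (h1S _ (hgmem _))
      | exact absurd h (h2S _ (hgmem _))
      | exact absurd h.symm (h2S _ (hgmem _))
      | exact h0S _ (hgmem _)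
      | exact (h0S _ (hgmem _)).symm
      | exact absurd h (hSS _ (hgmem _) _ (hgmem _) h.ne)
lemma ramsey_nbhd {V : Type} [Fintype V] (G : SimpleGraph V) {R t : ℕ}
    (hRam : RamseyProp R t G.cliqueNum) (z : V) (Y : Finset V)
    (hY : ∀ y ∈ Y, G.Adj z y)
    (hno : ∀ S : Finset V, S ⊆ Y → S.card = t →
      ∃ s ∈ S, ∃ s' ∈ S, s ≠ s' ∧ G.Adj s s') : Y.card < R := by
  classical
  by_contra hge
  push_neg at hge
  rcases hRam ↥Y (G.comap Subtype.val) (by rw [Fintype.card_coe]; exact hge) with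
    ⟨S, hcard, hind⟩ | ⟨S, hclique⟩
  · -- independent set: contradiction with hno
    obtain ⟨s, hs, s', hs', hne, hadj⟩ :=
      hno (S.map (Function.Embedding.subtype _))
        (by intro x hx; simp only [Finset.mem_map, Function.Embedding.coe_subtype] at hx
            obtain ⟨y, _, rfl⟩ := hx; exact y.prop)
        (by rw [Finset.card_map]; exact hcard)
    simp only [Finset.mem_map, Function.Embedding.coe_subtype] at hs hs'
    obtain ⟨y, hy, rfl⟩ := hs
    obtain ⟨y', hy', rfl⟩ := hs'
    exact hind y hy y' hy' (fun e => hne (congrArg _ e)) hadj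
  · -- clique of size cliqueNum: add z
    have hzY : z ∉ Y := fun h => G.irrefl (hY z h)
    set S' : Finset V := S.map (Function.Embedding.subtype _) with hS'
    have hS'sub : ∀ x ∈ S', x ∈ Y := by
      intro x hx; simp only [hS', Finset.mem_map, Function.Embedding.coe_subtype] at hx
      obtain ⟨y, _, rfl⟩ := hx; exact y.prop
    have hclique' : G.IsClique ↑S' := by
      intro x hx y hy hne
      simp only [hS', Finset.coe_map, Set.mem_image, Finset.mem_coe,
        Function.Embedding.coe_subtype] at hx hy
      obtain ⟨x', hx', rfl⟩ := hx
      obtain ⟨y', hy', rfl⟩ := hy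
      exact hclique.1 hx' hy' (fun e => hne (congrArg _ e))
    have hins : G.IsClique (insert z ↑S') := by
      rw [Set.insert_eq]
      apply hclique'.insert
      intro x hx _
      exact hY x (hS'sub x hx)
    have hzS' : z ∉ S' := fun h => hzY (hS'sub z h)
    have hcard' : (insert z S').card = G.cliqueNum + 1 := by
      rw [Finset.card_insert_of_notMem hzS', hS', Finset.card_map, hclique.2]
    have hle : (insert z S').card ≤ G.cliqueNum := by
      have : G.IsClique ↑(insert z S') := by rw [Finset.coe_insert]; exact hins
      exact IsClique.card_le_cliqueNum (tc := this)
    omega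
/-- Set version of `ramsey_nbhd`. -/
lemma ramsey_nbhd_set {V : Type} [Fintype V] (G : SimpleGraph V) {R t : ℕ}
    (hRam : RamseyProp R t G.cliqueNum) (z : V) (Y : Set V)
    (hY : ∀ y ∈ Y, G.Adj z y)
    (hno : ∀ S : Finset V, ↑S ⊆ Y → S.card = t →
      ∃ s ∈ S, ∃ s' ∈ S, s ≠ s' ∧ G.Adj s s') : Y.ncard < R := by
  classical
  rw [Set.ncard_eq_toFinset_card']
  apply ramsey_nbhd G hRam z
  · intro y hy; exact hY y (Set.mem_toFinset.mp hy)
  · intro S hsub hcard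
    exact hno S (fun s hs => Set.mem_toFinset.mp (hsub hs)) hcard

lemma greedy_colorable {α : Type} [Fintype α] (H : SimpleGraph α) (K : ℕ) (rank : α → ℕ)
    (hdeg : ∀ z : α, ({u : α | H.Adj z u ∧ rank z ≤ rank u}).ncard < K) :
    H.Colorable K := by
  classical
  have main : ∀ s : Finset α, ∃ C : α → ℕ, (∀ a ∈ s, C a < K) ∧
      (∀ a ∈ s, ∀ b ∈ s, H.Adj a b → C a ≠ C b) := by
    intro s
    induction s using Finset.strongInductionOn with
    | _ s ih =>
      rcases Finset.eq_empty_or_nonempty s with rfl | hne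
      · exact ⟨fun _ => 0, by simp, by simp⟩
      · obtain ⟨z, hz, hmin⟩ := Finset.exists_min_image s rank hne
        obtain ⟨C, hCK, hCvalid⟩ := ih (s.erase z) (Finset.erase_ssubset hz)
        set nbrs : Finset α := (s.erase z).filter (fun u => H.Adj z u) with hnbrs
        have hsub : nbrs ⊆ {u : α | H.Adj z u ∧ rank z ≤ rank u}.toFinset := by
          intro u hu
          simp only [hnbrs, Finset.mem_filter, Finset.mem_erase] at hu
          simp only [Set.mem_toFinset, Set.mem_setOf_eq]
          exact ⟨hu.2, hmin u hu.1.2⟩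
        have himg : (nbrs.image C).card < K := by
          calc (nbrs.image C).card ≤ nbrs.card := Finset.card_image_le
            _ ≤ _ := Finset.card_le_card hsub
            _ = {u : α | H.Adj z u ∧ rank z ≤ rank u}.ncard := by
                rw [Set.ncard_eq_toFinset_card']
            _ < K := hdeg z
        have hex : ((Finset.range K) \ (nbrs.image C)).Nonempty := by
          apply Finset.card_pos.mp
          have := Finset.le_card_sdiff (nbrs.image C) (Finset.range K)
          rw [Finset.card_range] at *
          omega
        obtain ⟨c, hc⟩ := hex
        rw [Finset.mem_sdiff, Finset.mem_range] at hc
        refine ⟨Function.update C z c, ?_, ?_⟩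
        · intro a ha
          rcases eq_or_ne a z with heq | haz
          · subst heq; rw [Function.update_self]; exact hc.1
          · rw [Function.update_of_ne haz]; exact hCK a (Finset.mem_erase.mpr ⟨haz, ha⟩)
        · intro a ha b hb hab
          rcases eq_or_ne a z with heq | haz <;> rcases eq_or_ne b z with heq' | hbz
          pick_goal 1
          · subst heq; subst heq'; exact absurd hab (H.irrefl)
          pick_goal 1
          · subst heq
            rw [Function.update_self, Function.update_of_ne hbz]
            intro e
            exact hc.2 (Finset.mem_image.mpr ⟨b, by
              simp only [hnbrs, Finset.mem_filter, Finset.mem_erase]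
              exact ⟨⟨hbz, hb⟩, hab⟩, e.symm⟩)
          · subst heq'
            rw [Function.update_of_ne haz, Function.update_self]
            intro e
            exact hc.2 (Finset.mem_image.mpr ⟨a, by
              simp only [hnbrs, Finset.mem_filter, Finset.mem_erase]
              exact ⟨⟨haz, ha⟩, hab.symm⟩, e⟩)
          · rw [Function.update_of_ne haz, Function.update_of_ne hbz]
            exact hCvalid a (Finset.mem_erase.mpr ⟨haz, ha⟩) b (Finset.mem_erase.mpr ⟨hbz, hb⟩) hab
  obtain ⟨C, hCK, hCvalid⟩ := main Finset.univ
  rcases Nat.eq_zero_or_pos K with rfl | hKpos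
  · rcases isEmpty_or_nonempty α with he | ⟨⟨a⟩⟩
    · exact ⟨Coloring.mk (fun a => (he.false a).elim) (fun {a} => (he.false a).elim)⟩
    · exact absurd (hCK a (Finset.mem_univ a)) (by omega)
  · refine ⟨Coloring.mk (fun a => ⟨C a, hCK a (Finset.mem_univ a)⟩) ?_⟩
    intro a b hab e
    exact hCvalid a (Finset.mem_univ a) b (Finset.mem_univ b) hab (by
      simpa using congrArg Fin.val e)

/-- Claim 4.4. Let `t ≥ 3`, `G` `{t-broom, K_{t,t}}`-free, `Q` complete
`q`-partite with singleton parts `V_1, …, V_{q-1}` and `|V_q| = t`, with `q` maximum.  With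
`A`, `B`, `W` as in the paper, `R` with the Ramsey property for `(t, ω(G))`, and
`W_0 = {w ∈ W : the component of G[W] containing w has chromatic number ≤ 3R}`,
the set `A ∪ B` is anticomplete to `W \ W_0`. -/
theorem AB_anticomplete_W_minus_W0 (t q : ℕ) (ht : 3 ≤ t) (hq : 2 ≤ q)
    (V : Type) [Fintype V] (G : SimpleGraph V)
    (hfree : _root_.Free G (tBroom t)) (hfree' : _root_.Free G (completeBipartiteGraph (Fin t) (Fin t)))
    (v : Fin (q - 1) → V) (Vq : Set V)
    (hinj : Function.Injective v) (hVq : Vq.ncard = t)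
    (hdisjq : ∀ i, v i ∉ Vq)
    (hindepq : ∀ u ∈ Vq, ∀ w ∈ Vq, ¬ G.Adj u w)
    (hcomp : ∀ i j, i ≠ j → G.Adj (v i) (v j))
    (hcompq : ∀ i, ∀ w ∈ Vq, G.Adj (v i) w)
    (hmax : ¬ ∃ (v' : Fin q → V) (Vq' : Set V),
        Function.Injective v' ∧ Vq'.ncard = t ∧ (∀ i, v' i ∉ Vq') ∧
        (∀ u ∈ Vq', ∀ w ∈ Vq', ¬ G.Adj u w) ∧
        (∀ i j, i ≠ j → G.Adj (v' i) (v' j)) ∧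
        (∀ i, ∀ w ∈ Vq', G.Adj (v' i) w))
    (R : ℕ) (hR : 0 < R) (hRam : RamseyProp R t G.cliqueNum)
    -- the sets `A`, `B`, `W`, `W₀`:
    (A B W W₀ : Set V)
    (hA : A = {x ∈ nbhd G (Set.range v ∪ Vq) | NeutralTo G x Vq ∧
            ¬ CompleteTo G x ((Set.range v ∪ Vq) \ Vq)})
    (hB : B = {x ∈ nbhd G (Set.range v ∪ Vq) | NeutralTo G x Vq ∧
            CompleteTo G x ((Set.range v ∪ Vq) \ Vq)})
    (hW : W = {x ∈ nbhd G (Set.range v ∪ Vq) | AnticompleteTo G x Vq})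
    (hW₀ : W₀ = {w : V | ∃ hw : w ∈ W,
        (G.induce (Subtype.val ''
            ((G.induce W).connectedComponentMk ⟨w, hw⟩).supp)).chromaticNumber
          ≤ ((3 * R : ℕ) : ℕ∞)}) :
    ∀ a ∈ A ∪ B, ∀ w ∈ W \ W₀, ¬ G.Adj a w := by

  classical
  intro a ha w hw hadj
  obtain ⟨hwW, hwW₀⟩ := hw
  apply hwW₀
  -- basic facts about a
  have haN : a ∈ nbhd G (Set.range v ∪ Vq) ∧ NeutralTo G a Vq := by
    rcases ha with ha | ha
    · rw [hA] at ha; exact ⟨ha.1, ha.2.1⟩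
    · rw [hB] at ha; exact ⟨ha.1, ha.2.1⟩
  obtain ⟨⟨haQ, -⟩, hanc, hana⟩ := haN
  have hu : ∃ u ∈ Vq, G.Adj a u := by
    by_contra h; push_neg at h; exact hana (fun z hz => h z hz)
  obtain ⟨u, huVq, hau⟩ := hu
  have hu' : ∃ u' ∈ Vq, ¬ G.Adj a u' := by
    by_contra h; push_neg at h; exact hanc (fun z hz => h z hz)
  obtain ⟨u', hu'Vq, hau'⟩ := hu'
  -- basic facts about W
  have hWfact : ∀ z ∈ W, z ∉ Set.range v ∪ Vq ∧ ∀ uu ∈ Vq, ¬ G.Adj z uu := by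
    intro z hz; rw [hW] at hz; exact ⟨hz.1.1, hz.2⟩
  have haW : a ∉ W := fun h => (hWfact a h).2 u huVq hau
  have hvnW : ∀ i z, z ∈ W → v i ≠ z := fun i z hz e => (hWfact z hz).1 (Or.inl ⟨i, e⟩)
  have hVqnW : ∀ z ∈ Vq, ∀ z' ∈ W, z ≠ z' := fun z hz z' hz' e =>
    (hWfact z' hz').1 (Or.inr (e ▸ hz))
  have havne : ∀ i, a ≠ v i := fun i e => haQ (Or.inl ⟨i, e.symm⟩)
  have hanVq : a ∉ Vq := fun h => haQ (Or.inr h)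
  -- the component of w, as a set of vertices of V
  set D : Set V := Subtype.val '' ((G.induce W).connectedComponentMk ⟨w, hwW⟩).supp with hD
  have hDiff : ∀ z, z ∈ D ↔ ∃ hz : z ∈ W,
      (G.induce W).connectedComponentMk ⟨z, hz⟩ = (G.induce W).connectedComponentMk ⟨w, hwW⟩ := by
    intro z
    constructor
    · rintro ⟨⟨z', hz'⟩, hmem, rfl⟩
      exact ⟨hz', (ConnectedComponent.mem_supp_iff _ _).mp hmem⟩
    · rintro ⟨hz, he⟩
      exact ⟨⟨z, hz⟩, (ConnectedComponent.mem_supp_iff _ _).mpr he, rfl⟩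
  have hDW : D ⊆ W := by rintro z ⟨⟨z', hz'⟩, -, rfl⟩; exact hz'
  have hwD : w ∈ D := (hDiff w).mpr ⟨hwW, rfl⟩
  have hclosed : ∀ z ∈ D, ∀ z' ∈ W, G.Adj z z' → z' ∈ D := by
    intro z hz z' hz' hzz'
    obtain ⟨hzW, he⟩ := (hDiff z).mp hz
    refine (hDiff z').mpr ⟨hz', ?_⟩
    rw [← he]
    refine ConnectedComponent.sound ?_
    exact (Adj.reachable (show (G.induce W).Adj ⟨z', hz'⟩ ⟨z, hzW⟩ by
      simp only [comap_adj, Function.Embedding.coe_subtype]; exact hzz'.symm))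
  -- goal : w ∈ W₀
  rw [hW₀]
  refine ⟨hwW, ?_⟩
  rw [← hD]
  by_cases hcase : ∀ i : Fin (q-1), ∀ d ∈ D, G.Adj (v i) d
  · -- CASE 1 : every vᵢ is complete to D; then G[D] has max degree < R
    have hdegD : ∀ d ∈ D, ({x | x ∈ D ∧ G.Adj d x}).ncard < R := by
      intro d hd
      apply ramsey_nbhd_set G hRam d
      · rintro y ⟨-, hy⟩; exact hy
      · intro S hsub hcard
        by_contra hcon
        push_neg at hcon
        apply hmax
        refine ⟨fun i => if h : (i : ℕ) < q - 1 then v ⟨i, h⟩ else d, ↑S,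
          ?_, ?_, ?_, ?_, ?_, ?_⟩
        · intro i1 i2 e
          by_cases h1 : (i1 : ℕ) < q - 1 <;> by_cases h2 : (i2 : ℕ) < q - 1
          · simp only [dif_pos h1, dif_pos h2] at e
            have := congrArg Fin.val (hinj e)
            exact Fin.ext this
          · simp only [dif_pos h1, dif_neg h2] at e
            exact absurd e (hvnW _ d (hDW hd))
          · simp only [dif_neg h1, dif_pos h2] at e
            exact absurd e.symm (hvnW _ d (hDW hd))
          · exact Fin.ext (by have := i1.isLt; have := i2.isLt; omega)
        · rw [Set.ncard_coe_finset, hcard]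
        · intro i hmem'
          rw [Finset.mem_coe] at hmem'
          by_cases h1 : (i : ℕ) < q - 1
          · simp only [dif_pos h1] at hmem'
            exact hvnW _ _ (hDW (hsub hmem').1) rfl
          · simp only [dif_neg h1] at hmem'
            exact G.irrefl (hsub hmem').2
        · intro x hx y hy hxy
          rcases eq_or_ne x y with rfl | hne
          · exact G.irrefl hxy
          · exact hcon x (Finset.mem_coe.mp hx) y (Finset.mem_coe.mp hy) hne hxy
        · intro i1 i2 hne
          by_cases h1 : (i1 : ℕ) < q - 1 <;> by_cases h2 : (i2 : ℕ) < q - 1 <;>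
            [simp only [dif_pos h1, dif_pos h2]; simp only [dif_pos h1, dif_neg h2];
             simp only [dif_neg h1, dif_pos h2]; simp only [dif_neg h1, dif_neg h2]]
          · refine hcomp _ _ ?_
            intro e
            exact hne (Fin.ext (by simpa using congrArg Fin.val e))
          · exact hcase _ d hd
          · exact (hcase _ d hd).symm
          · exact absurd (Fin.ext (show (i1:ℕ) = i2 by have := i1.isLt; have := i2.isLt; omega))
              hne
        · intro i s hs
          rw [Finset.mem_coe] at hs
          by_cases h1 : (i : ℕ) < q - 1
          · simp only [dif_pos h1]; exact hcase _ s (hsub hs).1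
          · simp only [dif_neg h1]; exact (hsub hs).2
    have hcol : (G.induce D).Colorable R := by
      apply greedy_colorable _ R (fun _ => 0)
      intro z
      calc {x : ↥D | (G.induce D).Adj z x ∧ 0 ≤ 0}.ncard
          = (Subtype.val '' {x : ↥D | (G.induce D).Adj z x ∧ 0 ≤ 0}).ncard :=
            (Set.ncard_image_of_injective _ Subtype.val_injective).symm
        _ ≤ ({x | x ∈ D ∧ G.Adj (↑z) x}).ncard := by
            apply Set.ncard_le_ncard _ (Set.toFinite _)
            rintro x ⟨x', ⟨hadjx, -⟩, rfl⟩
            exact ⟨x'.prop, hadjx⟩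
        _ < R := hdegD ↑z z.prop
    exact ((hcol.mono (by omega)).chromaticNumber_le)
  · -- CASE 2
    push_neg at hcase
    obtain ⟨j, d₀, hd₀D, hjd₀⟩ := hcase
    -- Vq as a finset
    have hT : Vq.toFinset.card = t := by rw [← Set.ncard_eq_toFinset_card']; exact hVq
    -- F1 : v j is anticomplete to D
    have hjD : ∀ d ∈ D, ¬ G.Adj (v j) d := by
      have key : ∀ (aa bb : ↥W) (_ : (G.induce W).Walk aa bb),
          G.Adj (v j) ↑aa → ¬ G.Adj (v j) ↑bb → False := by
        intro aa bb p
        induction p with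
        | nil => exact fun h1 h2 => h2 h1
        | @cons x y zz hxy p ih =>
          intro h1 h2
          by_cases hmid : G.Adj (v j) ↑y
          · exact ih hmid h2
          · refine broom_of_data G t hfree (v j) ↑x ↑y Vq.toFinset hT h1 ?_ hmid
              (hvnW j ↑y y.prop) ?_ ?_ ?_ ?_ ?_ ?_
            · simpa using hxy
            · intro s hs; exact hcompq j s (Set.mem_toFinset.mp hs)
            · intro s hs h'; exact (hWfact ↑x x.prop).2 s (Set.mem_toFinset.mp hs) h'
            · intro s hs h'; exact (hWfact ↑y y.prop).2 s (Set.mem_toFinset.mp hs) h'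
            · intro s hs s' hs' _
              exact hindepq s (Set.mem_toFinset.mp hs) s' (Set.mem_toFinset.mp hs')
            · intro hmem'
              exact hVqnW ↑x (Set.mem_toFinset.mp hmem') ↑x x.prop rfl
            · intro hmem'
              exact hVqnW ↑y (Set.mem_toFinset.mp hmem') ↑y y.prop rfl
      intro d hd hadj'
      obtain ⟨hdW, hed⟩ := (hDiff d).mp hd
      obtain ⟨h0W, he0⟩ := (hDiff d₀).mp hd₀D
      obtain ⟨p⟩ := ConnectedComponent.exact (hed.trans he0.symm)
      exact key ⟨d, hdW⟩ ⟨d₀, h0W⟩ p hadj' hjd₀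
    -- Claim A : no independent t-set in N(a) ∩ D
    have hA1 : ∀ S : Finset V, (∀ s ∈ S, s ∈ D ∧ G.Adj a s) → S.card = t →
        (∀ s ∈ S, ∀ s' ∈ S, s ≠ s' → ¬ G.Adj s s') → False := by
      intro S hmemS hcard hind
      by_cases haj : G.Adj a (v j)
      · -- broom : u0 = a, v1 = v j, v2 = u'
        refine broom_of_data G t hfree a (v j) u' S hcard haj
          (hcompq j u' hu'Vq) hau' (fun e => hanVq (e ▸ hu'Vq)) ?_ ?_ ?_ hind ?_ ?_
        · exact fun s hs => (hmemS s hs).2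
        · exact fun s hs => hjD s (hmemS s hs).1
        · exact fun s hs h' => (hWfact s (hDW (hmemS s hs).1)).2 u' hu'Vq h'.symm
        · exact fun hmem' => hvnW j _ (hDW (hmemS _ hmem').1) rfl
        · exact fun hmem' => hVqnW u' hu'Vq u' (hDW (hmemS _ hmem').1) rfl
      · -- broom : u0 = a, v1 = u, v2 = v j
        refine broom_of_data G t hfree a u (v j) S hcard hau
          (hcompq j u huVq).symm haj (havne j) ?_ ?_ ?_ hind ?_ ?_
        · exact fun s hs => (hmemS s hs).2
        · exact fun s hs h' => (hWfact s (hDW (hmemS s hs).1)).2 u huVq h'.symm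
        · exact fun s hs => hjD s (hmemS s hs).1
        · exact fun hmem' => hVqnW u huVq u (hDW (hmemS _ hmem').1) rfl
        · exact fun hmem' => hvnW j _ (hDW (hmemS _ hmem').1) rfl
    -- the auxiliary graph on D ∪ {a}
    set Dx : Set V := insert a D with hDx
    set HH : SimpleGraph ↥Dx := G.induce Dx with hHH
    have hmemax : a ∈ Dx := Set.mem_insert _ _
    set xx : ↥Dx := ⟨a, hmemax⟩ with hxx
    have hvalD : ∀ z : ↥Dx, z ≠ xx → (z : V) ∈ D := by
      intro z hz
      rcases z.prop with h | h
      · exact absurd (Subtype.ext h) hz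
      · exact h
    have hGadj : ∀ z1 z2 : ↥Dx, HH.Adj z1 z2 → G.Adj ↑z1 ↑z2 := by
      intro z1 z2 h
      simpa [hHH] using h
    have hGadj' : ∀ z1 z2 : ↥Dx, G.Adj ↑z1 ↑z2 → HH.Adj z1 z2 := by
      intro z1 z2 h
      simpa [hHH] using h
    -- reachability from xx
    have htransfer : ∀ (aa bb : ↥W) (p : (G.induce W).Walk aa bb) (haa : (aa : V) ∈ D),
        ∃ hb' : (bb : V) ∈ Dx, HH.Reachable ⟨↑aa, Set.mem_insert_of_mem _ haa⟩ ⟨↑bb, hb'⟩ := by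
      intro aa bb p
      induction p with
      | nil => exact fun haa => ⟨Set.mem_insert_of_mem _ haa, Reachable.refl _⟩
      | @cons x y zz hxy p ih =>
        intro haa
        have hyD : (y : V) ∈ D := hclosed ↑x haa ↑y y.prop (by simpa using hxy)
        obtain ⟨hb', hr⟩ := ih hyD
        refine ⟨hb', Reachable.trans ?_ hr⟩
        exact Adj.reachable (hGadj' ⟨↑x, Set.mem_insert_of_mem _ haa⟩
          ⟨↑y, Set.mem_insert_of_mem _ hyD⟩ (by simpa using hxy))
    have hreach : ∀ z : ↥Dx, HH.Reachable xx z := by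
      intro z
      rcases eq_or_ne z xx with rfl | hz
      · exact Reachable.refl _
      · have hzD := hvalD z hz
        obtain ⟨hzW, hez⟩ := (hDiff ↑z).mp hzD
        obtain ⟨p⟩ := (ConnectedComponent.exact hez).symm
        obtain ⟨hb', hr2⟩ := htransfer ⟨w, hwW⟩ ⟨↑z, hzW⟩ p hwD
        have hxw : HH.Adj xx ⟨w, Set.mem_insert_of_mem _ hwD⟩ :=
          hGadj' _ _ (show G.Adj a w from hadj)
        have hres : HH.Reachable xx ⟨(z : V), hb'⟩ := (hxw.reachable).trans hr2
        rwa [show (⟨(z : V), hb'⟩ : ↥Dx) = z from Subtype.ext rfl] at hres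
    haveI : Nonempty ↥Dx := ⟨xx⟩
    have hconn : HH.Connected := Connected.mk (fun z1 z2 => (hreach z1).symm.trans (hreach z2))
    set lev : ↥Dx → ℕ := fun z => HH.dist xx z with hlev
    have hadjdist : ∀ z1 z2 : ↥Dx, HH.Adj z1 z2 → lev z2 ≤ lev z1 + 1 := by
      intro z1 z2 h
      calc lev z2 ≤ HH.dist xx z1 + HH.dist z1 z2 := hconn.dist_triangle
        _ = lev z1 + 1 := by rw [dist_eq_one_iff_adj.mpr h]
    have hlevxx : ∀ z : ↥Dx, z ≠ xx → 1 ≤ lev z := by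
      intro z hz
      exact (hreach z).pos_dist_of_ne (fun e => hz (e.symm ▸ rfl))
    have hlevne : ∀ z : ↥Dx, lev z = 0 → z = xx := by
      intro z hz
      by_contra hne
      exact absurd hz (by have := hlevxx z hne; omega)
    have hparent : ∀ (z : ↥Dx) (n : ℕ), lev z = n + 1 → ∃ y, HH.Adj y z ∧ lev y = n := by
      intro z n hz
      obtain ⟨p, hp⟩ := (hreach z).exists_walk_length_eq_dist
      rw [show HH.dist xx z = n + 1 from hz] at hp
      have hadjy : HH.Adj (p.getVert n) (p.getVert (n+1)) := p.adj_getVert_succ (by omega)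
      have hvz : p.getVert (n+1) = z := by
        rw [show n + 1 = p.length from hp.symm]; exact p.getVert_length
      rw [hvz] at hadjy
      have hmem : p.getVert n ∈ p.support :=
        Walk.mem_support_iff_exists_getVert.mpr ⟨n, rfl, by omega⟩
      refine ⟨p.getVert n, hadjy, le_antisymm ?_ ?_⟩
      · have hspec := p.take_spec hmem
        have hlen : (p.takeUntil _ hmem).length + (p.dropUntil _ hmem).length = n + 1 := by
          rw [← Walk.length_append, hspec, hp]
        have hdrop : (p.dropUntil _ hmem).length ≠ 0 := by
          intro h0
          have he := Walk.eq_of_length_eq_zero h0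
          exact HH.irrefl (he ▸ hadjy)
        have := SimpleGraph.dist_le (p.takeUntil _ hmem)
        have hlev' : lev (p.getVert n) = HH.dist xx (p.getVert n) := rfl
        omega
      · have htri : HH.dist xx z ≤ HH.dist xx (p.getVert n) + HH.dist (p.getVert n) z :=
          hconn.dist_triangle
        rw [dist_eq_one_iff_adj.mpr hadjy, show HH.dist xx z = n + 1 from hz] at htri
        have hlev' : lev (p.getVert n) = HH.dist xx (p.getVert n) := rfl
        omega
    -- vertices of D have level ≥ 1, vertices adjacent to things two levels apart: nonadjacent
    have hgap : ∀ (z1 z2 : ↥Dx), lev z1 + 2 ≤ lev z2 → ¬ G.Adj ↑z1 ↑z2 := by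
      intro z1 z2 hle h
      have := hadjdist z1 z2 (hGadj' _ _ h)
      omega
    -- the "forward" bound : for every vertex y, the forward neighborhood has no indep t-set
    have hFwd : ∀ y : ↥Dx, ∀ S : Finset V, S.card = t →
        (∀ s ∈ S, ∃ hs : s ∈ Dx, HH.Adj y ⟨s, hs⟩ ∧ lev y + 1 ≤ lev ⟨s, hs⟩) →
        (∀ s ∈ S, ∀ s' ∈ S, s ≠ s' → ¬ G.Adj s s') → False := by
      intro y S hcard hmemS hind
      have hlevxx0 : lev xx = 0 := SimpleGraph.dist_self
      have hsD : ∀ s ∈ S, s ∈ D := by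
        intro s hs
        obtain ⟨hsDx, h1, h2⟩ := hmemS s hs
        refine hvalD ⟨s, hsDx⟩ (fun e => ?_)
        rw [e, hlevxx0] at h2; omega
      rcases hny : lev y with _ | c
      · -- y = xx : use Claim A
        have hyxx : y = xx := hlevne y hny
        apply hA1 S ?_ hcard hind
        intro s hs
        obtain ⟨hsDx, h1, h2⟩ := hmemS s hs
        rw [hyxx] at h1
        exact ⟨hsD s hs, hGadj _ _ h1⟩
      · obtain ⟨g, hgy, hg⟩ := hparent y c hny
        have hyD : (y : V) ∈ D := hvalD y (fun e => by rw [e, hlevxx0] at hny; omega)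
        rcases c with _ | m
        · -- g = xx : broom u0 = ↑y, v1 = a, v2 = u
          have hgxx : g = xx := hlevne g hg
          rw [hgxx] at hgy
          refine broom_of_data G t hfree ↑y a u S hcard ?_ hau ?_ ?_ ?_ ?_ ?_ hind ?_ ?_
          · exact (hGadj xx y hgy).symm
          · exact (hWfact ↑y (hDW hyD)).2 u huVq
          · exact fun e => hVqnW u huVq ↑y (hDW hyD) e.symm
          · intro s hs; obtain ⟨hsDx, h1, -⟩ := hmemS s hs; exact hGadj _ _ h1
          · intro s hs h'
            obtain ⟨hsDx, h1, h2⟩ := hmemS s hs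
            have hb := hadjdist xx _ (hGadj' xx ⟨s, hsDx⟩ h')
            rw [hlevxx0] at hb
            rw [hny] at h2
            omega
          · intro s hs h'
            exact (hWfact s (hDW (hsD s hs))).2 u huVq h'.symm
          · intro hmem'
            obtain ⟨hsDx, h1, h2⟩ := hmemS a hmem'
            rw [show (⟨a, hsDx⟩ : ↥Dx) = xx from Subtype.ext rfl, hlevxx0] at h2
            omega
          · intro hmem'
            exact hVqnW u huVq u (hDW (hsD u hmem')) rfl
        · -- g has its own parent gg
          obtain ⟨gg, hggg, hgg⟩ := hparent g m hg
          refine broom_of_data G t hfree ↑y ↑g ↑gg S hcard ((hGadj _ _ hgy).symm)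
            ((hGadj _ _ hggg).symm) ?_ ?_ ?_ ?_ ?_ hind ?_ ?_
          · exact fun h' => hgap gg y (by omega) h'.symm
          · intro e
            have he2 : y = gg := Subtype.ext e
            rw [he2, hgg] at hny; omega
          · intro s hs; obtain ⟨hsDx, h1, -⟩ := hmemS s hs; exact hGadj _ _ h1
          · intro s hs h'
            obtain ⟨hsDx, -, h2⟩ := hmemS s hs
            rw [hny] at h2
            exact hgap g ⟨s, hsDx⟩ (by omega) h'
          · intro s hs h'
            obtain ⟨hsDx, -, h2⟩ := hmemS s hs
            rw [hny] at h2
            exact hgap gg ⟨s, hsDx⟩ (by omega) h'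
          · intro hmem'
            obtain ⟨hsDx, -, h2⟩ := hmemS ↑g hmem'
            rw [show (⟨(g : V), hsDx⟩ : ↥Dx) = g from Subtype.ext rfl, hg, hny] at h2
            omega
          · intro hmem'
            obtain ⟨hsDx, -, h2⟩ := hmemS ↑gg hmem'
            rw [show (⟨(gg : V), hsDx⟩ : ↥Dx) = gg from Subtype.ext rfl, hgg, hny] at h2
            omega
    -- the "within" bound
    have hWithin : ∀ (z y : ↥Dx) (n : ℕ), lev z = n + 1 → HH.Adj y z → lev y = n →
        ∀ S : Finset V, S.card = t →
        (∀ s ∈ S, ∃ hs : s ∈ Dx, HH.Adj z ⟨s, hs⟩ ∧ n + 1 ≤ lev ⟨s, hs⟩ ∧ ¬ HH.Adj y ⟨s, hs⟩) →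
        (∀ s ∈ S, ∀ s' ∈ S, s ≠ s' → ¬ G.Adj s s') → False := by
      intro z y n hzn hyzadj hyn S hcard hmemS hind
      have hlevxx0 : lev xx = 0 := SimpleGraph.dist_self
      have hzD : (z : V) ∈ D := hvalD z (fun e => by rw [e, hlevxx0] at hzn; omega)
      have hsD : ∀ s ∈ S, s ∈ D := by
        intro s hs
        obtain ⟨hsDx, h1, h2, h3⟩ := hmemS s hs
        refine hvalD ⟨s, hsDx⟩ (fun e => ?_)
        rw [e, hlevxx0] at h2; omega
      rcases n with _ | m
      · -- y = xx
        have hyxx : y = xx := hlevne y hyn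
        rw [hyxx] at hyzadj
        refine broom_of_data G t hfree ↑z a u S hcard ?_ hau ?_ ?_ ?_ ?_ ?_ hind ?_ ?_
        · exact (hGadj xx z hyzadj).symm
        · exact (hWfact ↑z (hDW hzD)).2 u huVq
        · exact fun e => hVqnW u huVq ↑z (hDW hzD) e.symm
        · intro s hs; obtain ⟨hsDx, h1, -, -⟩ := hmemS s hs; exact hGadj _ _ h1
        · intro s hs h'
          obtain ⟨hsDx, -, -, h3⟩ := hmemS s hs
          rw [hyxx] at h3
          exact h3 (hGadj' _ _ h')
        · intro s hs h'
          exact (hWfact s (hDW (hsD s hs))).2 u huVq h'.symm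
        · intro hmem'
          obtain ⟨hsDx, h1, h2, -⟩ := hmemS a hmem'
          rw [show (⟨a, hsDx⟩ : ↥Dx) = xx from Subtype.ext rfl, hlevxx0] at h2
          omega
        · intro hmem'
          exact hVqnW u huVq u (hDW (hsD u hmem')) rfl
      · -- n = m + 1
        obtain ⟨g, hgy, hg⟩ := hparent y m hyn
        refine broom_of_data G t hfree ↑z ↑y ↑g S hcard ((hGadj _ _ hyzadj).symm)
          ((hGadj _ _ hgy).symm) ?_ ?_ ?_ ?_ ?_ hind ?_ ?_
        · exact fun h' => hgap g z (by omega) h'.symm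
        · intro e
          have he2 : z = g := Subtype.ext e
          rw [he2, hg] at hzn; omega
        · intro s hs; obtain ⟨hsDx, h1, -, -⟩ := hmemS s hs; exact hGadj _ _ h1
        · intro s hs h'
          obtain ⟨hsDx, -, -, h3⟩ := hmemS s hs
          exact h3 (hGadj' _ _ h')
        · intro s hs h'
          obtain ⟨hsDx, -, h2, -⟩ := hmemS s hs
          exact hgap g ⟨s, hsDx⟩ (by omega) h'
        · intro hmem'
          obtain ⟨hsDx, -, h2, -⟩ := hmemS ↑y hmem'
          rw [show (⟨(y : V), hsDx⟩ : ↥Dx) = y from Subtype.ext rfl, hyn] at h2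
          omega
        · intro hmem'
          obtain ⟨hsDx, -, h2, -⟩ := hmemS ↑g hmem'
          rw [show (⟨(g : V), hsDx⟩ : ↥Dx) = g from Subtype.ext rfl, hg] at h2
          omega
    -- cardinality bounds
    have himgcard : ∀ s : Set ↥Dx, s.ncard = (Subtype.val '' s).ncard := by
      intro s
      exact (Set.ncard_image_of_injective _ Subtype.val_injective).symm
    have hFbound : ∀ y : ↥Dx, {x : ↥Dx | HH.Adj y x ∧ lev y + 1 ≤ lev x}.ncard < R := by
      intro y
      rw [himgcard]
      apply ramsey_nbhd_set G hRam ↑y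
      · intro s hs
        obtain ⟨x, ⟨hx1, -⟩, rfl⟩ := hs
        exact hGadj _ _ hx1
      · intro S hsub hcard
        by_contra hcon
        push_neg at hcon
        refine hFwd y S hcard ?_ hcon
        intro s hs
        obtain ⟨x, ⟨hx1, hx2⟩, rfl⟩ := hsub hs
        exact ⟨x.prop, by simpa using hx1, by simpa using hx2⟩
    have hbound : ∀ z : ↥Dx, {x : ↥Dx | HH.Adj z x ∧ lev z ≤ lev x}.ncard < 2 * R := by
      intro z
      rcases eq_or_ne z xx with rfl | hz
      · have hsub : {x : ↥Dx | HH.Adj xx x ∧ lev xx ≤ lev x} ⊆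
            {x : ↥Dx | HH.Adj xx x ∧ lev xx + 1 ≤ lev x} := by
          intro x ⟨h1, h2⟩
          refine ⟨h1, ?_⟩
          have : lev xx = 0 := SimpleGraph.dist_self
          have hx1 : x ≠ xx := fun e => HH.irrefl (e ▸ h1)
          have := hlevxx x hx1
          omega
        have := Set.ncard_le_ncard hsub (Set.toFinite _)
        have := hFbound xx
        omega
      · obtain ⟨n, hn⟩ : ∃ n, lev z = n + 1 := ⟨lev z - 1, by have := hlevxx z hz; omega⟩
        obtain ⟨y, hyz, hy⟩ := hparent z n hn
        have hsplit : {x : ↥Dx | HH.Adj z x ∧ lev z ≤ lev x} ⊆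
            {x : ↥Dx | HH.Adj z x ∧ n + 1 ≤ lev x ∧ ¬ HH.Adj y x} ∪
            {x : ↥Dx | HH.Adj y x ∧ lev y + 1 ≤ lev x} := by
          intro x ⟨h1, h2⟩
          rw [hn] at h2
          by_cases hyx : HH.Adj y x
          · exact Or.inr ⟨hyx, by omega⟩
          · exact Or.inl ⟨h1, h2, hyx⟩
        have h1card : {x : ↥Dx | HH.Adj z x ∧ n + 1 ≤ lev x ∧ ¬ HH.Adj y x}.ncard < R := by
          rw [himgcard]
          apply ramsey_nbhd_set G hRam ↑z
          · intro s hs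
            obtain ⟨x, ⟨hx1, -, -⟩, rfl⟩ := hs
            exact hGadj _ _ hx1
          · intro S hsub hcard
            by_contra hcon
            push_neg at hcon
            refine hWithin z y n hn hyz hy S hcard ?_ hcon
            intro s hs
            obtain ⟨x, ⟨hx1, hx2, hx3⟩, rfl⟩ := hsub hs
            exact ⟨x.prop, by simpa using hx1, by simpa using hx2, by simpa using hx3⟩
        have h2card := hFbound y
        have hle := Set.ncard_union_le {x : ↥Dx | HH.Adj z x ∧ n + 1 ≤ lev x ∧ ¬ HH.Adj y x}
          {x : ↥Dx | HH.Adj y x ∧ lev y + 1 ≤ lev x}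
        have := Set.ncard_le_ncard hsplit (Set.toFinite _)
        omega
    have hcolHH : HH.Colorable (2 * R) := greedy_colorable HH (2 * R) lev hbound
    have hembed : (G.induce D) ↪g HH := by
      refine ⟨⟨fun z => ⟨↑z, Set.mem_insert_of_mem _ z.prop⟩, ?_⟩, ?_⟩
      · intro z1 z2 h
        have h2 := congrArg Subtype.val h
        exact Subtype.ext h2
      · intro z1 z2
        constructor
        · intro h; exact h
        · intro h; exact h
    have hcolD : (G.induce D).Colorable (2 * R) := hcolHH.of_hom hembed.toHom
    exact ((hcolD.mono (by omega)).chromaticNumber_le)
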